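/- Let Σ be a cyclic group of order k with generator σ, where m divides k, and let Π ⊆ Σ be the subgroup of order m with quotient Σ/Π generated by the image σ̄ of σ. Then the sequence of Z[Σ]-modules 0 → Z → Z[Σ] ⊕ Z → Z[Σ] ⊕ Z[Σ/Π] → Z[Σ/Π] → 0 is exact, where the first map is 1 ↦ (N_Σ, -m) with N_Σ = 1 + σ + ... + σ^{k-1}; the middle map sends (x, n) to ((1-σ)x, pr_Π(x) + n·(1 + σ̄ + ... + σ̄^{k/m-1})); and the last map sends (y, z̄) to pr_Π(y) + (-1 + σ̄)·z̄, with pr_Π: Z[Σ] → Z[Σ/Π] the natural projection. -/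

import Mathlib

open Finset

namespace CycAux
open MonoidAlgebra Multiplicative
variable (n : ℕ)

noncomputable def sg : MonoidAlgebra ℤ (Multiplicative (ZMod n)) :=
  MonoidAlgebra.of ℤ _ (ofAdd 1)
noncomputable def Nn : MonoidAlgebra ℤ (Multiplicative (ZMod n)) :=
  ∑ i ∈ Finset.range n, MonoidAlgebra.of ℤ _ (ofAdd (i : ZMod n))

lemma sg_pow (j : ℕ) : sg n ^ j = MonoidAlgebra.of ℤ _ (ofAdd (j : ZMod n)) := by
  rw [sg, ← map_pow]
  congr 1
  rw [← ofAdd_nsmul]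
  congr 1
  simp

variable [NeZero n]

lemma Nn_eq : Nn n = ∑ g : Multiplicative (ZMod n), MonoidAlgebra.of ℤ _ g := by
  rw [Nn]
  refine Finset.sum_nbij' (fun i => ofAdd (i : ZMod n)) (fun g => (toAdd g).val) ?_ ?_ ?_ ?_ ?_
  · intros; exact Finset.mem_univ _
  · intro g _; exact Finset.mem_range.2 (ZMod.val_lt _)
  · intro i hi
    simp [ZMod.val_cast_of_lt (Finset.mem_range.1 hi)]
  · intro g _
    simp [ZMod.natCast_rightInverse _]
  · intros; rfl

lemma sg_mul_Nn : sg n * Nn n = Nn n := by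
  rw [Nn_eq n, Finset.mul_sum]
  have : ∀ g : Multiplicative (ZMod n),
      sg n * MonoidAlgebra.of ℤ _ g = MonoidAlgebra.of ℤ _ (ofAdd (1 : ZMod n) * g) := by
    intro g; rw [sg, ← map_mul]
  simp_rw [this]
  exact Fintype.sum_equiv (Equiv.mulLeft (ofAdd (1 : ZMod n))) _ _ (fun g => rfl)

lemma Nn_apply (g : Multiplicative (ZMod n)) : (Nn n).coeff g = 1 := by
  rw [Nn_eq n]
  rw [MonoidAlgebra.coeff_sum, Finsupp.finset_sum_apply]
  simp_rw [MonoidAlgebra.of_apply, MonoidAlgebra.coeff_single, Finsupp.single_apply]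
  simp

lemma ker_sub (f : MonoidAlgebra ℤ (Multiplicative (ZMod n))) (hf : sg n * f = f) :
    f = (f.coeff 1) • Nn n := by
  have key : ∀ g : Multiplicative (ZMod n), f.coeff ((ofAdd (1 : ZMod n))⁻¹ * g) = f.coeff g := by
    intro g
    conv_rhs => rw [← hf]
    rw [sg, MonoidAlgebra.of_apply, MonoidAlgebra.coeff_single_mul_apply]
    ring
  have claim : ∀ j : ℕ, f.coeff (ofAdd ((j : ZMod n))) = f.coeff 1 := by
    intro j
    induction j with
    | zero => simp
    | succ j ih =>
      rw [← ih, ← key (ofAdd ((j+1 : ℕ) : ZMod n))]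
      congr 1
      rw [← ofAdd_neg, ← ofAdd_add]
      congr 1
      push_cast
      ring
  ext g
  rw [MonoidAlgebra.coeff_smul, Finsupp.smul_apply, Nn_apply n g, smul_eq_mul, mul_one]
  have : g = ofAdd (((toAdd g).val : ZMod n)) := by
    simp [ZMod.natCast_rightInverse _]
  rw [this, claim]

omit [NeZero n] in
lemma div_pow (j : ℕ) : ∃ x, (1 - sg n) * x = 1 - sg n ^ j := by
  induction j with
  | zero => exact ⟨0, by simp⟩
  | succ j ih =>
    obtain ⟨x, hx⟩ := ih
    exact ⟨1 + sg n * x, by rw [pow_succ]; ring_nf; linear_combination sg n * hx⟩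

noncomputable def aug : MonoidAlgebra ℤ (Multiplicative (ZMod n)) →ₐ[ℤ] ℤ :=
  MonoidAlgebra.lift ℤ ℤ (Multiplicative (ZMod n)) 1

omit [NeZero n] in
lemma aug_of (g : Multiplicative (ZMod n)) : aug n (MonoidAlgebra.of ℤ _ g) = 1 := by
  rw [aug, MonoidAlgebra.lift_of]; rfl

omit [NeZero n] in
lemma aug_single (g : Multiplicative (ZMod n)) (c : ℤ) :
    aug n (MonoidAlgebra.single g c) = c := by
  have : MonoidAlgebra.single g c = c • MonoidAlgebra.of ℤ (Multiplicative (ZMod n)) g := by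
    rw [MonoidAlgebra.of_apply, MonoidAlgebra.smul_single]; simp
  rw [this, map_zsmul, aug_of]; simp

omit [NeZero n] in
lemma aug_Nn : aug n (Nn n) = n := by
  rw [Nn, map_sum]
  simp_rw [aug_of]
  simp

omit [NeZero n] in
lemma aug_sub_one : aug n (-1 + sg n) = 0 := by
  rw [map_add, map_neg, map_one, sg, aug_of]
  ring

lemma mem_range_sub (f : MonoidAlgebra ℤ (Multiplicative (ZMod n))) (hεf : aug n f = 0) :
    ∃ x, (1 - sg n) * x = f := by
  set S : Submodule ℤ (MonoidAlgebra ℤ (Multiplicative (ZMod n))) :=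
    LinearMap.range (LinearMap.mulLeft ℤ (1 - sg n)) with hS
  have h1 : ∀ g : Multiplicative (ZMod n),
      (MonoidAlgebra.of ℤ (Multiplicative (ZMod n)) g - 1) ∈ S := by
    intro g
    obtain ⟨x, hx⟩ := div_pow n ((toAdd g).val)
    refine ⟨-x, ?_⟩
    have hg : MonoidAlgebra.of ℤ (Multiplicative (ZMod n)) g = sg n ^ (toAdd g).val := by
      rw [sg_pow]
      congr 1
      simp [ZMod.natCast_rightInverse _]
    rw [LinearMap.mulLeft_apply, mul_neg, hx, hg]
    ring
  have haug : ∑ a ∈ f.coeff.support, f.coeff a = 0 := by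
    have : f = ∑ a ∈ f.coeff.support, MonoidAlgebra.single a (f.coeff a) := by
      conv_lhs => rw [← MonoidAlgebra.sum_coeff_single f]
      rfl
    rw [this, map_sum] at hεf
    simp_rw [aug_single] at hεf
    exact hεf
  have expand : f = ∑ a ∈ f.coeff.support,
      f.coeff a • (MonoidAlgebra.of ℤ (Multiplicative (ZMod n)) a - 1) := by
    have h2 : ∑ a ∈ f.coeff.support, f.coeff a • MonoidAlgebra.of ℤ (Multiplicative (ZMod n)) a = f := by
      conv_rhs => rw [← MonoidAlgebra.sum_coeff_single f]
      rw [Finsupp.sum]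
      refine Finset.sum_congr rfl fun a _ => ?_
      rw [MonoidAlgebra.of_apply, MonoidAlgebra.smul_single]; simp
    simp_rw [smul_sub]
    rw [Finset.sum_sub_distrib, h2, ← Finset.sum_smul, haug]
    simp
  have : f ∈ S := by
    rw [expand]
    exact Submodule.sum_smul_mem S _ (fun a _ => h1 a)
  obtain ⟨x, hx⟩ := this
  exact ⟨x, hx⟩

omit [NeZero n] in
lemma mapDomain_comp' {A B C : Type*} (f : A → B) (g : B → C) (v : MonoidAlgebra ℤ A) :
    MonoidAlgebra.mapDomain (g ∘ f) v = MonoidAlgebra.mapDomain g (MonoidAlgebra.mapDomain f v) := by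
  ext; simp [Finsupp.mapDomain_comp]

omit [NeZero n] in
lemma mapDomain_id' {A : Type*} (v : MonoidAlgebra ℤ A) :
    MonoidAlgebra.mapDomain id v = v := by
  ext; simp

end CycAux

set_option maxHeartbeats 1000000 in
/-- We model the cyclic group `Σ` of order `k` with generator `σ` as
`Multiplicative (ZMod k)` with `σ = ofAdd 1`; the subgroup `Π` of order `m ∣ k` is the
kernel of the reduction `ZMod k → ZMod (k/m)`, so `Σ/Π = Multiplicative (ZMod (k/m))`.
The quadruple `0 → ℤ → ℤ[Σ]⊕ℤ → ℤ[Σ]⊕ℤ[Σ/Π] → ℤ[Σ/Π] → 0` with maps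
`1 ↦ (N_Σ, -m)`, `(x,n) ↦ ((1-σ)x, pr_Π(x) + n·(1+σ̄+...+σ̄^{k/m-1}))`,
`(y,z̄) ↦ pr_Π(y) + (-1+σ̄)z̄` is exact. -/
theorem stmt_10 (k m : ℕ) (hm : 2 ≤ m) (hmk : m ∣ k) (hk : 0 < k)
    (pr : MonoidAlgebra ℤ (Multiplicative (ZMod k)) →
      MonoidAlgebra ℤ (Multiplicative (ZMod (k / m))))
    (hpr : pr = MonoidAlgebra.mapDomain (fun x => Multiplicative.ofAdd
      (ZMod.castHom (Nat.div_dvd_of_dvd hmk) (ZMod (k / m)) (Multiplicative.toAdd x))))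
    (Nbig : MonoidAlgebra ℤ (Multiplicative (ZMod k)))
    (hNbig : Nbig = ∑ i ∈ range k, MonoidAlgebra.of ℤ _ (Multiplicative.ofAdd (i : ZMod k)))
    (N' : MonoidAlgebra ℤ (Multiplicative (ZMod (k / m))))
    (hN' : N' = ∑ i ∈ range (k / m),
      MonoidAlgebra.of ℤ _ (Multiplicative.ofAdd (i : ZMod (k / m))))
    (d₀ : ℤ → MonoidAlgebra ℤ (Multiplicative (ZMod k)) × ℤ)
    (hd₀ : ∀ n : ℤ, d₀ n = (n • Nbig, -(m * n)))
    (d₁ : MonoidAlgebra ℤ (Multiplicative (ZMod k)) × ℤ →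
      MonoidAlgebra ℤ (Multiplicative (ZMod k)) ×
        MonoidAlgebra ℤ (Multiplicative (ZMod (k / m))))
    (hd₁ : ∀ x, d₁ x =
      ((1 - MonoidAlgebra.of ℤ _ (Multiplicative.ofAdd (1 : ZMod k))) * x.1,
        pr x.1 + x.2 • N'))
    (d₂ : MonoidAlgebra ℤ (Multiplicative (ZMod k)) ×
        MonoidAlgebra ℤ (Multiplicative (ZMod (k / m))) →
      MonoidAlgebra ℤ (Multiplicative (ZMod (k / m))))
    (hd₂ : ∀ y, d₂ y = pr y.1 +
      (-1 + MonoidAlgebra.of ℤ _ (Multiplicative.ofAdd (1 : ZMod (k / m)))) * y.2) :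
    Function.Injective d₀ ∧ Function.Exact d₀ d₁ ∧ Function.Exact d₁ d₂ ∧
      Function.Surjective d₂ := by
  haveI : NeZero k := ⟨hk.ne'⟩
  have hmpos : 0 < m := by omega
  have hk'pos : 0 < k / m := Nat.div_pos (Nat.le_of_dvd hk hmk) hmpos
  haveI : NeZero (k / m) := ⟨hk'pos.ne'⟩
  have hkk' : k = (k / m) * m := (Nat.div_mul_cancel hmk).symm
  have hNeq : Nbig = CycAux.Nn k := by rw [hNbig]; rfl
  have hN'eq : N' = CycAux.Nn (k / m) := by rw [hN']; rfl
  have hsg : MonoidAlgebra.of ℤ _ (Multiplicative.ofAdd (1 : ZMod k)) = CycAux.sg k := rfl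
  have hsg' : MonoidAlgebra.of ℤ _ (Multiplicative.ofAdd (1 : ZMod (k / m))) =
      CycAux.sg (k / m) := rfl
  set F : Multiplicative (ZMod k) →* Multiplicative (ZMod (k / m)) :=
    AddMonoidHom.toMultiplicative
      (ZMod.castHom (Nat.div_dvd_of_dvd hmk) (ZMod (k / m))).toAddMonoidHom with hFdef
  have hprF : pr = ⇑(MonoidAlgebra.mapDomainRingHom ℤ F) := by
    rw [hpr]; funext x; rw [MonoidAlgebra.mapDomainRingHom_apply]; rfl
  have pr_of : ∀ g, pr (MonoidAlgebra.of ℤ _ g) = MonoidAlgebra.of ℤ _ (F g) := by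
    intro g
    rw [hprF, MonoidAlgebra.mapDomainRingHom_apply, MonoidAlgebra.of_apply,
      MonoidAlgebra.of_apply]
    exact MonoidAlgebra.mapDomain_single
  have pr_sg : pr (CycAux.sg k) = CycAux.sg (k / m) := by
    rw [CycAux.sg, pr_of, CycAux.sg]
    congr 1
    have : F (Multiplicative.ofAdd (1 : ZMod k)) = Multiplicative.ofAdd
        ((ZMod.castHom (Nat.div_dvd_of_dvd hmk) (ZMod (k / m))) (1 : ZMod k)) := rfl
    rw [this, map_one]
  have pr_Nn : pr (CycAux.Nn k) = (m : ℤ) • CycAux.Nn (k / m) := by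
    rw [CycAux.Nn, hprF, map_sum]
    have step : ∀ i : ℕ,
        (MonoidAlgebra.mapDomainRingHom ℤ F) (MonoidAlgebra.of ℤ _
          (Multiplicative.ofAdd (i : ZMod k))) =
        MonoidAlgebra.of ℤ _ (Multiplicative.ofAdd (i : ZMod (k / m))) := by
      intro i
      rw [← hprF, pr_of]
      congr 1
      show Multiplicative.ofAdd ((ZMod.castHom (Nat.div_dvd_of_dvd hmk) (ZMod (k/m)))
        ((i : ZMod k))) = _
      rw [map_natCast]
    simp_rw [step]
    have per : ∀ t : ℕ, ∑ i ∈ range ((k / m) * t),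
        MonoidAlgebra.of ℤ (Multiplicative (ZMod (k/m))) (Multiplicative.ofAdd (i : ZMod (k/m)))
        = t • ∑ i ∈ range (k / m),
        MonoidAlgebra.of ℤ (Multiplicative (ZMod (k/m)))
          (Multiplicative.ofAdd (i : ZMod (k/m))) := by
      intro t
      induction t with
      | zero => simp
      | succ t ih =>
        rw [Nat.mul_succ, Finset.sum_range_add, ih, succ_nsmul]
        congr 1
        refine Finset.sum_congr rfl fun i _ => ?_
        congr 2
        push_cast
        simp [ZMod.natCast_self]
    have hper := per m
    rw [← hkk'] at hper
    rw [hper, CycAux.Nn, natCast_zsmul]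
  have aug_pr : ∀ f, CycAux.aug (k / m) (pr f) = CycAux.aug k f := by
    intro f
    rw [hpr]
    induction f using MonoidAlgebra.induction_linear with
    | zero => rw [MonoidAlgebra.mapDomain_zero]; simp
    | add a b ha hb => rw [MonoidAlgebra.mapDomain_add, map_add, map_add, ha, hb]
    | single g c =>
      rw [MonoidAlgebra.mapDomain_single]
      rw [CycAux.aug_single, CycAux.aug_single]
  refine ⟨?_, ?_, ?_, ?_⟩
  · -- injectivity of d₀
    intro a b hab
    rw [hd₀, hd₀, Prod.ext_iff] at hab
    have := hab.2
    simp only [neg_inj] at this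
    have hm0 : (m : ℤ) ≠ 0 := by exact_mod_cast hmpos.ne'
    exact mul_left_cancel₀ hm0 this
  · -- exactness at first
    intro ⟨x, n⟩
    constructor
    · intro h
      rw [hd₁, Prod.ext_iff] at h
      obtain ⟨h1, h2⟩ := h
      simp only at h1 h2
      rw [hsg] at h1
      have hfix : CycAux.sg k * x = x := by
        have : x - CycAux.sg k * x = 0 := by rw [← one_sub_mul]; exact h1
        linear_combination -this
      have hx := CycAux.ker_sub k x hfix
      set c := x.coeff 1 with hc
      have hprx : pr x = (c * m) • CycAux.Nn (k / m) := by
        rw [hx, hprF, map_zsmul, ← hprF, pr_Nn, smul_smul]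
      have hcomb : ((c * m + n) : ℤ) • CycAux.Nn (k / m) = 0 := by
        rw [hN'eq] at h2
        rw [add_smul, ← hprx]
        exact h2
      have hzero : c * m + n = 0 := by
        have := congrArg (CycAux.aug (k / m)) hcomb
        rw [map_zsmul, CycAux.aug_Nn, map_zero, smul_eq_mul] at this
        have hk'0 : ((k / m : ℕ) : ℤ) ≠ 0 := by exact_mod_cast hk'pos.ne'
        exact (mul_eq_zero.1 this).resolve_right hk'0
      refine ⟨c, ?_⟩
      rw [hd₀, Prod.ext_iff]
      constructor
      · simp only
        rw [hNeq, ← hx]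
      · simp only
        linarith
    · rintro ⟨a, ha⟩
      rw [← ha]
      rw [hd₀, hd₁, Prod.ext_iff]
      constructor
      · simp only [Prod.fst_zero]
        rw [hsg, hNeq]
        have : (1 - CycAux.sg k) * CycAux.Nn k = 0 := by
          have := CycAux.sg_mul_Nn k
          linear_combination -this
        rw [mul_smul_comm, this, smul_zero]
      · simp only [Prod.snd_zero]
        rw [hNeq, hN'eq, hprF, map_zsmul, ← hprF, pr_Nn, smul_smul, ← add_smul,
          show a * (m:ℤ) + -(↑m * a) = 0 by ring, zero_smul]
  · -- exactness at second
    intro ⟨y, z⟩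
    constructor
    · intro h
      rw [hd₂] at h
      simp only at h
      rw [hsg'] at h
      have hay : CycAux.aug k y = 0 := by
        have := congrArg (CycAux.aug (k / m)) h
        rw [map_add, map_mul, CycAux.aug_sub_one, zero_mul, add_zero, aug_pr, map_zero] at this
        exact this
      obtain ⟨x, hx⟩ := CycAux.mem_range_sub k y hay
      have hpry : pr y = (1 - CycAux.sg (k / m)) * pr x := by
        rw [← hx, hprF, map_mul, map_sub, map_one, ← hprF, pr_sg]
      have hker : CycAux.sg (k / m) * (pr x - z) = pr x - z := by
        rw [hpry] at h
        linear_combination -h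
      have hxz := CycAux.ker_sub (k / m) (pr x - z) hker
      set c := (pr x - z).coeff 1 with hc
      refine ⟨(x, -c), ?_⟩
      rw [hd₁, Prod.ext_iff]
      refine ⟨by simp only; rw [hsg, hx], ?_⟩
      simp only
      rw [hN'eq, neg_smul, ← hxz]
      ring
    · rintro ⟨⟨x, n⟩, ha⟩
      rw [← ha]
      rw [hd₁, hd₂]
      simp only
      rw [hsg, hsg', hN'eq]
      have h1 : pr ((1 - CycAux.sg k) * x) = (1 - CycAux.sg (k / m)) * pr x := by
        rw [hprF, map_mul, map_sub, map_one, ← hprF, pr_sg]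
      rw [h1]
      have h2 : (-1 + CycAux.sg (k / m)) * (n • CycAux.Nn (k / m)) = 0 := by
        rw [mul_smul_comm]
        have := CycAux.sg_mul_Nn (k / m)
        have hz : (-1 + CycAux.sg (k / m)) * CycAux.Nn (k / m) = 0 := by
          linear_combination this
        rw [hz, smul_zero]
      rw [mul_add, h2, add_zero]
      ring
  · -- surjectivity
    intro z
    refine ⟨(MonoidAlgebra.mapDomain
      (fun g : Multiplicative (ZMod (k / m)) =>
        Multiplicative.ofAdd (((Multiplicative.toAdd g).val : ZMod k))) z, 0), ?_⟩
    rw [hd₂]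
    simp only [mul_zero, add_zero]
    rw [hpr, ← CycAux.mapDomain_comp']
    have : ((fun x => Multiplicative.ofAdd
        (ZMod.castHom (Nat.div_dvd_of_dvd hmk) (ZMod (k / m)) (Multiplicative.toAdd x))) ∘
        (fun g : Multiplicative (ZMod (k / m)) =>
          Multiplicative.ofAdd (((Multiplicative.toAdd g).val : ZMod k)))) = id := by
      funext g
      simp only [Function.comp_apply, id_eq, toAdd_ofAdd]
      have h1 : (ZMod.castHom (Nat.div_dvd_of_dvd hmk) (ZMod (k / m)))
          (((Multiplicative.toAdd g).val : ZMod k))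
          = (((Multiplicative.toAdd g).val : ZMod (k / m))) := map_natCast _ _
      have h2 : (((Multiplicative.toAdd g).val : ZMod (k / m))) = Multiplicative.toAdd g :=
        ZMod.natCast_rightInverse _
      rw [h1, h2, ofAdd_toAdd]
    rw [this, CycAux.mapDomain_id']
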